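/- Under the hypotheses of the two-velocity SIR system with constant λ's, the macroscopic densities S = S⁺+S⁻, I = I⁺+I⁻, R = R⁺+R⁻ and fluxes J_S = λ_S(S⁺-S⁻), J_I = λ_I(I⁺-I⁻), J_R = λ_R(R⁺-R⁻) satisfy the six macroscopic equations: ∂ₜS + ∂ₓJ_S = -βSI; ∂ₜI + ∂ₓJ_I = βSI - γI; ∂ₜR + ∂ₓJ_R = γI; ∂ₜJ_S + λ_S² ∂ₓS = -β J_S I - J_S/τ_S; ∂ₜJ_I + λ_I² ∂ₓI = (λ_I/λ_S) β J_S I - γ J_I - J_I/τ_I; ∂ₜJ_R + λ_R² ∂ₓR = (λ_R/λ_I) γ J_I - J_R/τ_R. -/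

import Mathlib

private lemma slice_diff {f : ℝ → ℝ → ℝ}
    (hf : Differentiable ℝ (fun p : ℝ × ℝ => f p.1 p.2)) (x t : ℝ) :
    DifferentiableAt ℝ (fun t' => f x t') t ∧ DifferentiableAt ℝ (fun x' => f x' t) x := by
  constructor
  · exact (hf (x, t)).comp t ((differentiableAt_const x).prodMk differentiableAt_id)
  · exact (hf (x, t)).comp (f := fun x' : ℝ => (x', t)) x (differentiableAt_fun_id.prodMk (differentiableAt_const t))


/-- The macroscopic formulation of the two-velocity SIR transport system:
densities `S, I, R` and fluxes `J_C = λ_C(C⁺ - C⁻)` satisfy the six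
macroscopic equations. -/
theorem sir_macroscopic_formulation
    (lS lI lR tauS tauI tauR : ℝ)
    (hlS : lS > 0) (hlI : lI > 0) (hlR : lR > 0)
    (htauS : tauS > 0) (htauI : tauI > 0) (htauR : tauR > 0)
    (Sp Sm Ip Im Rp Rm β γ : ℝ → ℝ → ℝ)
    (hSp : Differentiable ℝ (fun p : ℝ × ℝ => Sp p.1 p.2))
    (hSm : Differentiable ℝ (fun p : ℝ × ℝ => Sm p.1 p.2))
    (hIp : Differentiable ℝ (fun p : ℝ × ℝ => Ip p.1 p.2))
    (hIm : Differentiable ℝ (fun p : ℝ × ℝ => Im p.1 p.2))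
    (hRp : Differentiable ℝ (fun p : ℝ × ℝ => Rp p.1 p.2))
    (hRm : Differentiable ℝ (fun p : ℝ × ℝ => Rm p.1 p.2))
    (hSpEq : ∀ x t, deriv (fun t' => Sp x t') t + lS * deriv (fun x' => Sp x' t) x
      = -(β x t) * Sp x t * (Ip x t + Im x t) - (1/(2*tauS)) * (Sp x t - Sm x t))
    (hSmEq : ∀ x t, deriv (fun t' => Sm x t') t - lS * deriv (fun x' => Sm x' t) x
      = -(β x t) * Sm x t * (Ip x t + Im x t) + (1/(2*tauS)) * (Sp x t - Sm x t))
    (hIpEq : ∀ x t, deriv (fun t' => Ip x t') t + lI * deriv (fun x' => Ip x' t) x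
      = β x t * Sp x t * (Ip x t + Im x t) - γ x t * Ip x t - (1/(2*tauI)) * (Ip x t - Im x t))
    (hImEq : ∀ x t, deriv (fun t' => Im x t') t - lI * deriv (fun x' => Im x' t) x
      = β x t * Sm x t * (Ip x t + Im x t) - γ x t * Im x t + (1/(2*tauI)) * (Ip x t - Im x t))
    (hRpEq : ∀ x t, deriv (fun t' => Rp x t') t + lR * deriv (fun x' => Rp x' t) x
      = γ x t * Ip x t - (1/(2*tauR)) * (Rp x t - Rm x t))
    (hRmEq : ∀ x t, deriv (fun t' => Rm x t') t - lR * deriv (fun x' => Rm x' t) x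
      = γ x t * Im x t + (1/(2*tauR)) * (Rp x t - Rm x t)) :
    ∀ x t,
      (deriv (fun t' => Sp x t' + Sm x t') t + deriv (fun x' => lS * (Sp x' t - Sm x' t)) x
        = -(β x t) * (Sp x t + Sm x t) * (Ip x t + Im x t)) ∧
      (deriv (fun t' => Ip x t' + Im x t') t + deriv (fun x' => lI * (Ip x' t - Im x' t)) x
        = β x t * (Sp x t + Sm x t) * (Ip x t + Im x t) - γ x t * (Ip x t + Im x t)) ∧
      (deriv (fun t' => Rp x t' + Rm x t') t + deriv (fun x' => lR * (Rp x' t - Rm x' t)) x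
        = γ x t * (Ip x t + Im x t)) ∧
      (deriv (fun t' => lS * (Sp x t' - Sm x t')) t
          + lS^2 * deriv (fun x' => Sp x' t + Sm x' t) x
        = -(β x t) * (lS * (Sp x t - Sm x t)) * (Ip x t + Im x t)
          - (lS * (Sp x t - Sm x t)) / tauS) ∧
      (deriv (fun t' => lI * (Ip x t' - Im x t')) t
          + lI^2 * deriv (fun x' => Ip x' t + Im x' t) x
        = (lI/lS) * β x t * (lS * (Sp x t - Sm x t)) * (Ip x t + Im x t)
          - γ x t * (lI * (Ip x t - Im x t)) - (lI * (Ip x t - Im x t)) / tauI) ∧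
      (deriv (fun t' => lR * (Rp x t' - Rm x t')) t
          + lR^2 * deriv (fun x' => Rp x' t + Rm x' t) x
        = (lR/lI) * γ x t * (lI * (Ip x t - Im x t)) - (lR * (Rp x t - Rm x t)) / tauR) := by
  intro x t
  obtain ⟨hSpt, hSpx⟩ := slice_diff hSp x t
  obtain ⟨hSmt, hSmx⟩ := slice_diff hSm x t
  obtain ⟨hIpt, hIpx⟩ := slice_diff hIp x t
  obtain ⟨hImt, hImx⟩ := slice_diff hIm x t
  obtain ⟨hRpt, hRpx⟩ := slice_diff hRp x t
  obtain ⟨hRmt, hRmx⟩ := slice_diff hRm x t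
  have hlS' : lS ≠ 0 := ne_of_gt hlS
  have hlI' : lI ≠ 0 := ne_of_gt hlI
  have htS' : tauS ≠ 0 := ne_of_gt htauS
  have htI' : tauI ≠ 0 := ne_of_gt htauI
  have htR' : tauR ≠ 0 := ne_of_gt htauR
  rw [deriv_fun_add hSpt hSmt, deriv_fun_add hIpt hImt, deriv_fun_add hRpt hRmt,
    deriv_const_mul _ (hSpx.fun_sub hSmx), deriv_const_mul _ (hIpx.fun_sub hImx),
    deriv_const_mul _ (hRpx.fun_sub hRmx),
    deriv_const_mul _ (hSpt.fun_sub hSmt), deriv_const_mul _ (hIpt.fun_sub hImt),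
    deriv_const_mul _ (hRpt.fun_sub hRmt),
    deriv_fun_add hSpx hSmx, deriv_fun_add hIpx hImx, deriv_fun_add hRpx hRmx,
    deriv_fun_sub hSpx hSmx, deriv_fun_sub hIpx hImx, deriv_fun_sub hRpx hRmx,
    deriv_fun_sub hSpt hSmt, deriv_fun_sub hIpt hImt, deriv_fun_sub hRpt hRmt]
  refine ⟨?_, ?_, ?_, ?_, ?_, ?_⟩
  · linear_combination hSpEq x t + hSmEq x t
  · linear_combination hIpEq x t + hImEq x t
  · linear_combination hRpEq x t + hRmEq x t
  · linear_combination lS * hSpEq x t - lS * hSmEq x t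
  · linear_combination lI * hIpEq x t - lI * hImEq x t
      - (lI * β x t * (Sp x t - Sm x t) * (Ip x t + Im x t)) * mul_inv_cancel₀ hlS'
  · linear_combination lR * hRpEq x t - lR * hRmEq x t
      - (lR * γ x t * (Ip x t - Im x t)) * mul_inv_cancel₀ hlI'
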